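/- arXiv:2002.11693 — 4 statements merged into one kernel-verified Lean document; each statement's English description precedes it below -/
import Mathlib

section
/- Let W_1,…,W_m be independent exponential random variables with rates a_1,…,a_m > 0, let a_* = min_i a_i, W = W_1+⋯+W_m, and μ = E[W] = Σ_i 1/a_i. Then for any 0 < λ ≤ 1, P(W ≤ λμ) ≤ exp(−a_* μ (λ − 1 − log λ)). -/
open MeasureTheory ProbabilityTheory
open scoped ENNReal NNReal

section Aux
open Real Set

lemma integral_exp_mul_expMeasure {r t : ℝ} (hr : 0 < r) (ht : t < r) :
    ∫ x, Real.exp (t * x) ∂(expMeasure r) = r / (r - t) := by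
  have hrt : 0 < r - t := sub_pos.mpr ht
  have hmeq : expMeasure r
      = volume.withDensity (fun x => ((gammaPDFReal 1 r x).toNNReal : ℝ≥0∞)) := rfl
  rw [hmeq, integral_withDensity_eq_integral_smul ((measurable_gammaPDFReal 1 r).real_toNNReal)]
  have hpdf : ∀ x : ℝ, gammaPDFReal 1 r x = if 0 ≤ x then r * Real.exp (-(r * x)) else 0 := by
    intro x
    rw [gammaPDFReal]
    simp only [rpow_one, Real.Gamma_one, div_one, sub_self, Real.rpow_zero, mul_one]
  have hpt : ∀ x : ℝ, (gammaPDFReal 1 r x).toNNReal • Real.exp (t * x)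
      = (Ici (0:ℝ)).indicator (fun x => r * Real.exp (-((r - t) * x))) x := by
    intro x
    rw [NNReal.smul_def, Real.coe_toNNReal _ (gammaPDFReal_nonneg zero_lt_one hr x), hpdf]
    by_cases hx : 0 ≤ x
    · rw [if_pos hx, Set.indicator_apply, if_pos (mem_Ici.mpr hx), smul_eq_mul, mul_assoc,
        ← Real.exp_add]
      ring_nf
    · rw [if_neg hx, Set.indicator_apply, if_neg (fun h => hx (mem_Ici.mp h)), zero_smul]
  rw [integral_congr_ae (Filter.Eventually.of_forall hpt), integral_indicator measurableSet_Ici,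
    integral_Ici_eq_integral_Ioi, integral_const_mul]
  have key := integral_rpow_mul_exp_neg_mul_Ioi (a := 1) zero_lt_one hrt
  simp only [sub_self, Real.rpow_zero, Real.rpow_one, Real.Gamma_one, mul_one, one_mul,
    one_div] at key
  rw [key]
  field_simp

lemma ae_nonneg_of_map_expMeasure {Ω : Type*} [MeasureSpace Ω] {X : Ω → ℝ}
    (hX : Measurable X) {r : ℝ} (h : Measure.map X ℙ = expMeasure r) :
    ∀ᵐ ω ∂(ℙ : Measure Ω), 0 ≤ X ω := by
  have h0 : (ℙ : Measure Ω) (X ⁻¹' Iio 0) = 0 := by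
    rw [← Measure.map_apply hX measurableSet_Iio, h]
    show (volume.withDensity (gammaPDF 1 r)) (Iio 0) = 0
    rw [withDensity_apply _ measurableSet_Iio]
    rw [setLIntegral_congr_fun measurableSet_Iio
      (fun x (hx : x ∈ Iio 0) => gammaPDF_of_neg hx)]
    simp
  rw [ae_iff]
  simpa [not_le] using (show (ℙ : Measure Ω) {a | X a < 0} = 0 from h0)

lemma aux_ratio_le {a b c : ℝ} (hb : 0 < b) (hba : b ≤ a) (hc : 0 ≤ c) :
    a / (a + c) ≤ Real.exp (-(b / a * Real.log (1 + c / b))) := by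
  have ha : 0 < a := hb.trans_le hba
  have hcb : 0 ≤ c / b := div_nonneg hc hb.le
  have h1 : (1 + c / b) ^ (b / a) ≤ (a + c) / a := by
    calc (1 + c / b) ^ (b / a) ≤ 1 + b / a * (c / b) :=
          rpow_one_add_le_one_add_mul_self (by linarith) (by positivity)
            ((div_le_one ha).mpr hba)
      _ = (a + c) / a := by field_simp
  have hx : (0:ℝ) < (1 + c / b) ^ (b / a) := rpow_pos_of_pos (by linarith) _
  have h2 : Real.exp (-(b / a * Real.log (1 + c / b))) = ((1 + c / b) ^ (b / a))⁻¹ := by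
    rw [Real.exp_neg, Real.rpow_def_of_pos (by linarith), mul_comm]
  rw [h2]
  calc a / (a + c) = ((a + c) / a)⁻¹ := by rw [inv_div]
    _ ≤ ((1 + c / b) ^ (b / a))⁻¹ := by
        apply inv_anti₀ hx h1

end Aux

open Real Set in
/-- Janson's inequality for sums of independent exponentials: if W_i is exponential with
rate a_i, W = ∑ W_i, μ = E W = ∑ 1/a_i, a_* = min_i a_i, then for 0 < λ ≤ 1,
P(W ≤ λμ) ≤ exp(−a_* μ (λ − 1 − log λ)). -/
theorem janson_exponential_lower_tail
    {Ω : Type*} [MeasureSpace Ω] (hP : IsProbabilityMeasure (ℙ : Measure Ω))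
    (m : ℕ) (hm : 0 < m) (a : Fin m → ℝ) (ha : ∀ i, 0 < a i)
    (W : Fin m → Ω → ℝ) (hmeas : ∀ i, Measurable (W i))
    (hindep : iIndepFun W ℙ)
    (hexp : ∀ i, Measure.map (W i) ℙ = expMeasure (a i))
    (lam : ℝ) (hlam0 : 0 < lam) (hlam1 : lam ≤ 1) :
    ℙ {ω | ∑ i, W i ω ≤ lam * ∑ i, (a i)⁻¹}
      ≤ ENNReal.ofReal
          (Real.exp (-(⨅ i, a i) * (∑ i, (a i)⁻¹) * (lam - 1 - Real.log lam))) := by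
  have hne : Nonempty (Fin m) := ⟨⟨0, hm⟩⟩
  obtain ⟨j, hj⟩ : ∃ j, ∀ i, a j ≤ a i := Finite.exists_min a
  set A : ℝ := ⨅ i, a i with hA
  have hAj : A = a j := le_antisymm (ciInf_le (Finite.bddBelow_range a) j) (le_ciInf hj)
  have hApos : 0 < A := hAj ▸ ha j
  have hAle : ∀ i, A ≤ a i := fun i => hAj ▸ hj i
  set μ0 : ℝ := ∑ i, (a i)⁻¹ with hμ0
  set θ : ℝ := A * (1 / lam - 1) with hθ
  have hlaminv : 1 ≤ 1 / lam := by rw [le_div_iff₀ hlam0]; linarith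
  have hθ0 : 0 ≤ θ := mul_nonneg hApos.le (by linarith)
  set t : ℝ := -θ with htdef
  have ht : t ≤ 0 := neg_nonpos.mpr hθ0
  -- nonnegativity
  have hsumnn : ∀ᵐ ω ∂(ℙ : Measure Ω), 0 ≤ ∑ i, W i ω := by
    have h := ae_all_iff.mpr (fun i => ae_nonneg_of_map_expMeasure (hmeas i) (hexp i))
    filter_upwards [h] with ω hω
    exact Finset.sum_nonneg fun i _ => hω i
  have hXm : Measurable (∑ i, W i : Ω → ℝ) := by
    have : (∑ i, W i : Ω → ℝ) = fun ω => ∑ i, W i ω := by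
      funext ω; exact Finset.sum_apply _ _ _
    rw [this]
    exact Finset.measurable_sum _ (fun i _ => hmeas i)
  -- integrability
  have hint : Integrable (fun ω => Real.exp (t * (∑ i, W i) ω)) ℙ := by
    refine Integrable.mono' (integrable_const 1) ((hXm.const_mul t).exp.aestronglyMeasurable) ?_
    filter_upwards [hsumnn] with ω hω
    rw [Real.norm_eq_abs, Real.abs_exp, Real.exp_le_one_iff]
    have : (∑ i, W i) ω = ∑ i, W i ω := Finset.sum_apply _ _ _
    rw [this]
    exact mul_nonpos_of_nonpos_of_nonneg ht hω
  have hchern := measure_le_le_exp_mul_mgf (μ := ℙ) (X := ∑ i, W i) (lam * μ0) ht hint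
  rw [hindep.mgf_sum hmeas Finset.univ] at hchern
  -- individual mgf
  have hmgf : ∀ i : Fin m, mgf (W i) ℙ t = a i / (a i + θ) := by
    intro i
    have : mgf (W i) ℙ t = ∫ x, Real.exp (t * x) ∂(Measure.map (W i) ℙ) := by
      rw [mgf]
      exact (integral_map (hmeas i).aemeasurable ((measurable_id.const_mul t).exp.aestronglyMeasurable)).symm
    rw [this, hexp i, integral_exp_mul_expMeasure (ha i) (lt_of_le_of_lt ht (ha i)), htdef,
      sub_neg_eq_add]
  -- product bound
  have hlog : Real.log (1 + θ / A) = -Real.log lam := by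
    have h1 : 1 + θ / A = 1 / lam := by
      rw [hθ, mul_comm, mul_div_assoc, div_self hApos.ne', mul_one]; ring
    rw [h1, one_div, Real.log_inv]
  have hprod : ∏ i, mgf (W i) ℙ t ≤ Real.exp (A * μ0 * Real.log lam) := by
    calc ∏ i, mgf (W i) ℙ t = ∏ i, a i / (a i + θ) := Finset.prod_congr rfl fun i _ => hmgf i
      _ ≤ ∏ i, Real.exp (-(A / a i * Real.log (1 + θ / A))) := by
          refine Finset.prod_le_prod (fun i _ => ?_) (fun i _ => aux_ratio_le hApos (hAle i) hθ0)
          exact div_nonneg (ha i).le (add_nonneg (ha i).le hθ0)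
      _ = Real.exp (∑ i, -(A / a i * Real.log (1 + θ / A))) := (Real.exp_sum _ _).symm
      _ = Real.exp (A * μ0 * Real.log lam) := by
          congr 1
          rw [hlog]
          simp only [mul_neg, neg_neg, div_eq_mul_inv]
          rw [← Finset.sum_mul, ← Finset.mul_sum, ← hμ0]
  -- combine the exponentials
  have hfinal : Real.exp (-t * (lam * μ0)) * ∏ i, mgf (W i) ℙ t
      ≤ Real.exp (-A * μ0 * (lam - 1 - Real.log lam)) := by
    calc Real.exp (-t * (lam * μ0)) * ∏ i, mgf (W i) ℙ t
        ≤ Real.exp (-t * (lam * μ0)) * Real.exp (A * μ0 * Real.log lam) := by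
          exact mul_le_mul_of_nonneg_left hprod (Real.exp_pos _).le
      _ = Real.exp (-A * μ0 * (lam - 1 - Real.log lam)) := by
          rw [← Real.exp_add]
          congr 1
          rw [htdef, neg_neg, hθ]
          field_simp
          ring
  -- conclude
  have hset : {ω | ∑ i, W i ω ≤ lam * μ0} = {ω | (∑ i, W i) ω ≤ lam * μ0} := by
    ext ω; simp [Finset.sum_apply]
  rw [hset, ← ENNReal.ofReal_toReal (measure_ne_top ℙ _)]
  exact ENNReal.ofReal_le_ofReal (hchern.trans hfinal)
end

section
/- For any continuous random vector q in ℝ^d, any N ≥ 1, independent copies q_1,…,q_N of q with convex hull Q_N, and any measurable set A ⊆ ℝ^d, E[Vol(Q_N)] ≤ Vol(A) + N · (sup_{x ∈ A^c} ξ(x)) · Vol(A^c ∩ {x : ξ(x) > 0}), where ξ(x) = inf{P(q ∈ H) : H a closed half-space containing x}. -/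
open MeasureTheory ProbabilityTheory
open scoped ENNReal

lemma mem_hull_iff_weights {N : ℕ} {E : Type*} [AddCommGroup E] [Module ℝ E]
    (p : Fin N → E) (x : E) :
    x ∈ convexHull ℝ (Set.range p) ↔
      ∃ w : Fin N → ℝ, (∀ i, 0 ≤ w i) ∧ ∑ i, w i = 1 ∧ ∑ i, w i • p i = x := by
  constructor
  · intro hx
    rw [convexHull_range_eq_exists_affineCombination] at hx
    obtain ⟨s, w, hw₀, hw₁, hx⟩ := hx
    refine ⟨fun i => if i ∈ s then w i else 0, ?_, ?_, ?_⟩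
    · intro i
      by_cases hi : i ∈ s <;> simp [hi, hw₀ i]
    · rw [Finset.sum_ite_mem, Finset.univ_inter, hw₁]
    · rw [← hx, Finset.affineCombination_eq_linear_combination s p w hw₁]
      simp only [ite_smul, zero_smul]
      rw [Finset.sum_ite_mem, Finset.univ_inter]
  · rintro ⟨w, hw₀, hw₁, hx⟩
    exact mem_convexHull_of_exists_fintype w p hw₀ hw₁ (fun i => Set.mem_range_self i) hx

lemma isClosed_hull_pair (d N : ℕ) :
    IsClosed {px : (Fin N → (Fin d → ℝ)) × (Fin d → ℝ) |
      px.2 ∈ convexHull ℝ (Set.range px.1)} := by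
  haveI : CompactSpace (stdSimplex ℝ (Fin N)) :=
    isCompact_iff_compactSpace.mp (isCompact_stdSimplex ℝ (Fin N))
  have hD : IsClosed {wp : stdSimplex ℝ (Fin N) × ((Fin N → (Fin d → ℝ)) × (Fin d → ℝ)) |
      ∑ i, (wp.1 : Fin N → ℝ) i • wp.2.1 i = wp.2.2} := by
    apply isClosed_eq
    · apply continuous_finset_sum
      intro i _
      exact ((continuous_apply i).comp (continuous_subtype_val.comp continuous_fst)).smul
        ((continuous_apply i).comp (continuous_fst.comp continuous_snd))
    · exact continuous_snd.comp continuous_snd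
  have himg := isClosedMap_snd_of_compactSpace _ hD
  convert himg using 1
  ext px
  simp only [Set.mem_setOf_eq, Set.mem_image]
  rw [mem_hull_iff_weights]
  constructor
  · rintro ⟨w, hw₀, hw₁, hx⟩
    exact ⟨(⟨w, hw₀, hw₁⟩, px), hx, rfl⟩
  · rintro ⟨⟨w, px'⟩, hx, rfl⟩
    exact ⟨(w : Fin N → ℝ), w.2.1, w.2.2, hx⟩

/-- Dyer–Füredi–McDiarmid upper bound: for an absolutely continuous random vector q and
i.i.d. copies q_1,…,q_N with convex hull Q_N, and any measurable A ⊆ ℝ^d,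
E Vol(Q_N) ≤ Vol(A) + N · (sup_{Aᶜ} ξ) · Vol(Aᶜ ∩ {ξ > 0}), where
ξ(x) = inf of P(q ∈ H) over closed half-spaces H containing x. -/
theorem dfm_upper_bound
    (d N : ℕ) (hN : 1 ≤ N)
    {Ω : Type*} [MeasureSpace Ω] (hP : IsProbabilityMeasure (ℙ : Measure Ω))
    (q : Ω → (Fin d → ℝ)) (hq : Measurable q)
    (hcont : Measure.map q ℙ ≪ (volume : Measure (Fin d → ℝ)))
    (qs : Fin N → Ω → (Fin d → ℝ)) (hmeas : ∀ i, Measurable (qs i))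
    (hindep : iIndepFun qs ℙ)
    (hcopies : ∀ i, Measure.map (qs i) ℙ = Measure.map q ℙ)
    (A : Set (Fin d → ℝ)) (hA : MeasurableSet A)
    (ξ : (Fin d → ℝ) → ℝ≥0∞)
    (hξ : ξ = fun x => ⨅ (a : Fin d → ℝ) (_ : a ≠ 0) (c : ℝ) (_ : c ≤ ∑ i, a i * x i),
        ℙ {ω | c ≤ ∑ i, a i * q ω i}) :
    ∫⁻ ω, volume (convexHull ℝ (Set.range fun i => qs i ω)) ∂ℙ
      ≤ volume A + N * (⨆ x ∈ Aᶜ, ξ x) * volume (Aᶜ ∩ {x | 0 < ξ x}) := by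
  haveI := hP
  set Q : Ω → Set (Fin d → ℝ) := fun ω => convexHull ℝ (Set.range fun i => qs i ω) with hQdef
  have hNne : (N : ℝ≥0∞) ≠ 0 := by
    simp only [ne_eq, Nat.cast_eq_zero]
    omega
  have hNtop : (N : ℝ≥0∞) ≠ ⊤ := ENNReal.natCast_ne_top N
  -- measurability of the bundled map
  have hΦ : Measurable (fun ω => (fun i => qs i ω : Fin N → (Fin d → ℝ))) :=
    measurable_pi_lambda _ (fun i => hmeas i)
  have hC := (isClosed_hull_pair d N).measurableSet
  -- measurability of the event {ω | x ∈ Q ω}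
  have hEmeas : ∀ x : Fin d → ℝ, MeasurableSet {ω | x ∈ Q ω} := fun x =>
    (hΦ.prodMk measurable_const) hC
  -- measurability of the graph set
  have hF : MeasurableSet {z : Ω × (Fin d → ℝ) | z.2 ∈ Q z.1} :=
    ((hΦ.comp measurable_fst).prodMk measurable_snd) hC
  -- key probabilistic bound
  have hPbound : ∀ x : Fin d → ℝ, ℙ {ω | x ∈ Q ω} ≤ N * ξ x := by
    intro x
    have key : ∀ a : Fin d → ℝ, a ≠ 0 → ∀ c : ℝ, c ≤ ∑ i, a i * x i →
        ℙ {ω | x ∈ Q ω} ≤ N * ℙ {ω | c ≤ ∑ i, a i * q ω i} := by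
      intro a ha c hc
      have hlin : IsLinearMap ℝ (fun y : Fin d → ℝ => ∑ j, a j * y j) := by
        constructor
        · intro y z
          simp [mul_add, Finset.sum_add_distrib]
        · intro r y
          simp only [Pi.smul_apply, smul_eq_mul, Finset.mul_sum]
          congr 1
          ext j
          ring
      have hsub : {ω | x ∈ Q ω} ⊆ ⋃ i, {ω | c ≤ ∑ j, a j * qs i ω j} := by
        intro ω hω
        by_contra hcon
        simp only [Set.mem_iUnion, Set.mem_setOf_eq, not_exists, not_le] at hcon
        have hconv : Q ω ⊆ {y | ∑ j, a j * y j < c} := by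
          apply convexHull_min
          · rintro y ⟨i, rfl⟩
            exact hcon i
          · exact convex_halfSpace_lt hlin c
        exact absurd (hconv hω) (not_lt.2 hc)
      have hS : MeasurableSet {y : Fin d → ℝ | c ≤ ∑ j, a j * y j} := by
        apply measurableSet_le measurable_const
        exact Finset.measurable_sum _ (fun j _ => measurable_const.mul (measurable_pi_apply j))
      have hEq : ∀ i, ℙ {ω | c ≤ ∑ j, a j * qs i ω j} = ℙ {ω | c ≤ ∑ j, a j * q ω j} := by
        intro i
        have h1 : ℙ {ω | c ≤ ∑ j, a j * qs i ω j}
            = Measure.map (qs i) ℙ {y | c ≤ ∑ j, a j * y j} := by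
          rw [Measure.map_apply (hmeas i) hS]
          rfl
        have h2 : ℙ {ω | c ≤ ∑ j, a j * q ω j}
            = Measure.map q ℙ {y | c ≤ ∑ j, a j * y j} := by
          rw [Measure.map_apply hq hS]
          rfl
        rw [h1, h2, hcopies i]
      calc ℙ {ω | x ∈ Q ω} ≤ ℙ (⋃ i, {ω | c ≤ ∑ j, a j * qs i ω j}) := measure_mono hsub
        _ ≤ ∑' i : Fin N, ℙ {ω | c ≤ ∑ j, a j * qs i ω j} := measure_iUnion_le _
        _ = ∑ i : Fin N, ℙ {ω | c ≤ ∑ j, a j * qs i ω j} := tsum_fintype _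
        _ = ∑ _i : Fin N, ℙ {ω | c ≤ ∑ j, a j * q ω j} := by
            exact Finset.sum_congr rfl (fun i _ => hEq i)
        _ = N * ℙ {ω | c ≤ ∑ j, a j * q ω j} := by
            rw [Finset.sum_const, Finset.card_univ, Fintype.card_fin, nsmul_eq_mul]
    have hdiv : ℙ {ω | x ∈ Q ω} / N ≤ ξ x := by
      rw [hξ]
      refine le_iInf fun a => le_iInf fun ha => le_iInf fun c => le_iInf fun hc => ?_
      rw [ENNReal.div_le_iff_le_mul (Or.inl hNne) (Or.inl hNtop)]
      exact (key a ha c hc).trans (le_of_eq (mul_comm _ _))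
    calc ℙ {ω | x ∈ Q ω} = N * (ℙ {ω | x ∈ Q ω} / N) :=
          (ENNReal.mul_div_cancel hNne hNtop).symm
      _ ≤ N * ξ x := mul_le_mul_right hdiv _
  -- the graph set restricted to Aᶜ
  set G : Set (Ω × (Fin d → ℝ)) := {z | z.2 ∈ Q z.1} ∩ (Prod.snd ⁻¹' Aᶜ) with hGdef
  have hG : MeasurableSet G := hF.inter (measurable_snd hA.compl)
  have hQclosed : ∀ ω, IsClosed (Q ω) :=
    fun ω => ((Set.finite_range _).isCompact_convexHull ℝ).isClosed
  have h1 : ∀ ω, volume (Q ω ∩ Aᶜ) = ∫⁻ x, G.indicator 1 (ω, x) := by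
    intro ω
    rw [← lintegral_indicator_one ((hQclosed ω).measurableSet.inter hA.compl)]
    refine lintegral_congr fun x => ?_
    rfl
  have h2 : ∫⁻ ω, volume (Q ω ∩ Aᶜ) ∂ℙ = ∫⁻ x, ∫⁻ ω, G.indicator 1 (ω, x) ∂ℙ := by
    simp_rw [h1]
    exact lintegral_lintegral_swap ((measurable_one.indicator hG).aemeasurable)
  have h3 : ∀ x : Fin d → ℝ, (∫⁻ ω, G.indicator 1 (ω, x) ∂ℙ) ≤
      (Aᶜ ∩ {x | 0 < ξ x}).indicator (fun _ => N * (⨆ y ∈ Aᶜ, ξ y)) x := by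
    intro x
    by_cases hxA : x ∈ Aᶜ
    · have heq : ∀ ω, G.indicator (1 : Ω × (Fin d → ℝ) → ℝ≥0∞) (ω, x)
          = ({ω | x ∈ Q ω}).indicator (1 : Ω → ℝ≥0∞) ω := by
        intro ω
        by_cases h : x ∈ Q ω
        · rw [Set.indicator_of_mem (show (ω, x) ∈ G from Set.mem_inter h hxA),
            Set.indicator_of_mem (show ω ∈ {ω | x ∈ Q ω} from h)]
          rfl
        · rw [Set.indicator_of_notMem (show (ω, x) ∉ G from fun hc => h hc.1),
            Set.indicator_of_notMem (show ω ∉ {ω | x ∈ Q ω} from h)]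
      rw [lintegral_congr heq, lintegral_indicator_one (hEmeas x)]
      by_cases hξx : 0 < ξ x
      · rw [Set.indicator_of_mem (Set.mem_inter hxA hξx)]
        exact (hPbound x).trans (mul_le_mul_right (le_biSup ξ hxA) _)
      · have hz : ξ x = 0 := by
          simpa using hξx
        have := hPbound x
        rw [hz, mul_zero] at this
        exact le_trans this (zero_le)
    · have heq : ∀ ω, G.indicator (1 : Ω × (Fin d → ℝ) → ℝ≥0∞) (ω, x) = 0 := by
        intro ω
        apply Set.indicator_of_notMem
        intro h
        exact hxA h.2
      rw [lintegral_congr heq, lintegral_zero]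
      exact zero_le
  have main : ∫⁻ ω, volume (Q ω ∩ Aᶜ) ∂ℙ
      ≤ N * (⨆ y ∈ Aᶜ, ξ y) * volume (Aᶜ ∩ {x | 0 < ξ x}) := by
    rw [h2]
    refine le_trans (lintegral_mono h3) ?_
    set s := Aᶜ ∩ {x | 0 < ξ x}
    set c := (N : ℝ≥0∞) * (⨆ y ∈ Aᶜ, ξ y)
    calc ∫⁻ x, s.indicator (fun _ => c) x
        ≤ ∫⁻ x, (toMeasurable volume s).indicator (fun _ => c) x :=
          lintegral_mono (Set.indicator_le_indicator_of_subset
            (subset_toMeasurable _ _) (fun _ => zero_le))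
      _ = c * volume (toMeasurable volume s) :=
          lintegral_indicator_const (measurableSet_toMeasurable _ _) c
      _ = c * volume s := by rw [measure_toMeasurable]
  calc ∫⁻ ω, volume (Q ω) ∂ℙ
      = ∫⁻ ω, (volume (Q ω ∩ A) + volume (Q ω ∩ Aᶜ)) ∂ℙ := by
        apply lintegral_congr
        intro ω
        rw [← measure_inter_add_diff (Q ω) hA, Set.diff_eq]
    _ ≤ ∫⁻ ω, (volume A + volume (Q ω ∩ Aᶜ)) ∂ℙ :=
        lintegral_mono (fun ω =>
          add_le_add_left (measure_mono Set.inter_subset_right) _)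
    _ = volume A + ∫⁻ ω, volume (Q ω ∩ Aᶜ) ∂ℙ := by
        rw [lintegral_add_left measurable_const, lintegral_const, measure_univ, mul_one]
    _ ≤ volume A + N * (⨆ x ∈ Aᶜ, ξ x) * volume (Aᶜ ∩ {x | 0 < ξ x}) :=
        add_le_add le_rfl main
end

section
/- Let q be uniformly distributed on the simplex S_d = {x ∈ ℝ^d : x_i ≥ 0, Σ x_i ≤ 1}. For every θ ∈ ℝ^d with θ_i < d for all i, and every d ≥ 7, E[e^{⟨θ,q⟩}] ≤ d · Π_{i=1}^d 1/(1 − θ_i/d). -/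
open MeasureTheory

open Set

def simsk (d : ℕ) (c : ℝ) : Set (Fin d → ℝ) := {x | (∀ i, 0 ≤ x i) ∧ ∑ i, x i ≤ c}

lemma simsk_empty {d : ℕ} {c : ℝ} (hc : c < 0) : simsk d c = ∅ := by
  ext x
  simp only [simsk, Set.mem_setOf_eq, Set.mem_empty_iff_false, iff_false, not_and]
  intro hx
  have : (0:ℝ) ≤ ∑ i, x i := Finset.sum_nonneg fun i _ => hx i
  linarith

lemma isClosed_simsk (d : ℕ) (c : ℝ) : IsClosed (simsk d c) := by
  have h1 : IsClosed {x : Fin d → ℝ | ∀ i, 0 ≤ x i} := by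
    have : {x : Fin d → ℝ | ∀ i, 0 ≤ x i} = ⋂ i, {x : Fin d → ℝ | 0 ≤ x i} := by
      ext x; simp
    rw [this]
    exact isClosed_iInter (fun i => isClosed_le continuous_const (continuous_apply i))
  have h2 : IsClosed {x : Fin d → ℝ | ∑ i, x i ≤ c} :=
    isClosed_le (continuous_finset_sum _ fun i _ => continuous_apply i) continuous_const
  exact h1.inter h2

lemma volume_simsk : ∀ (d : ℕ) (c : ℝ), 0 ≤ c →
    volume (simsk d c) = ENNReal.ofReal (c ^ d / d.factorial) := by
  intro d
  induction d with
  | zero =>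
      intro c hc
      have : simsk 0 c = Set.univ := by
        ext x
        simp [simsk, hc]
      rw [this, MeasureTheory.volume_pi, MeasureTheory.Measure.pi_univ]
      simp
  | succ d ih =>
      intro c hc
      set e := MeasurableEquiv.piFinSuccAbove (fun _ : Fin (d+1) => ℝ) 0 with he
      have hmp := measurePreserving_piFinSuccAbove (fun _ : Fin (d+1) => (volume : Measure ℝ)) 0
      set T : Set (ℝ × (Fin d → ℝ)) :=
        {p | 0 ≤ p.1 ∧ (∀ i, 0 ≤ p.2 i) ∧ p.1 + ∑ i, p.2 i ≤ c} with hT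
      have hcont : Continuous (fun p : ℝ × (Fin d → ℝ) => p.1 + ∑ i, p.2 i) :=
        continuous_fst.add
          (continuous_finset_sum _ fun i _ => (continuous_apply i).comp continuous_snd)
      have hTclosed : IsClosed T := by
        have h1 : IsClosed {p : ℝ × (Fin d → ℝ) | 0 ≤ p.1} :=
          isClosed_le continuous_const continuous_fst
        have h2 : IsClosed {p : ℝ × (Fin d → ℝ) | ∀ i, 0 ≤ p.2 i} := by
          have : {p : ℝ × (Fin d → ℝ) | ∀ i, 0 ≤ p.2 i}
              = ⋂ i, {p : ℝ × (Fin d → ℝ) | 0 ≤ p.2 i} := by ext p; simp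
          rw [this]
          exact isClosed_iInter fun i =>
            isClosed_le continuous_const ((continuous_apply i).comp continuous_snd)
        have h3 : IsClosed {p : ℝ × (Fin d → ℝ) | p.1 + ∑ i, p.2 i ≤ c} :=
          isClosed_le hcont continuous_const
        have h4 : T = {p : ℝ × (Fin d → ℝ) | 0 ≤ p.1} ∩
            ({p | ∀ i, 0 ≤ p.2 i} ∩ {p | p.1 + ∑ i, p.2 i ≤ c}) := by
          ext p; simp [hT, and_assoc]
        rw [h4]
        exact h1.inter (h2.inter h3)
      have hpre : simsk (d+1) c = e ⁻¹' T := by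
        ext x
        simp only [simsk, Set.mem_setOf_eq, Set.mem_preimage, hT, he,
          MeasurableEquiv.piFinSuccAbove_apply, Fin.zero_succAbove,
          Fin.forall_fin_succ, Fin.sum_univ_succ]
        tauto
      have hmeasT : MeasurableSet T := hTclosed.measurableSet
      have key : Measure.pi (fun _ : Fin (d+1) => (volume : Measure ℝ)) (e ⁻¹' T)
          = ((volume : Measure ℝ).prod (Measure.pi fun _ : Fin d => (volume : Measure ℝ))) T :=
        hmp.measure_preimage hmeasT.nullMeasurableSet
      rw [hpre, MeasureTheory.volume_pi, key, Measure.prod_apply hmeasT]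
      have hslice : ∀ t : ℝ, (Prod.mk t ⁻¹' T) = if 0 ≤ t then simsk d (c - t) else ∅ := by
        intro t
        ext y
        by_cases ht : 0 ≤ t
        · simp only [hT, Set.mem_preimage, Set.mem_setOf_eq, if_pos ht, simsk, ht, true_and]
          constructor
          · rintro ⟨h1, h2⟩; exact ⟨h1, by linarith⟩
          · rintro ⟨h1, h2⟩; exact ⟨h1, by linarith⟩
        · simp [hT, ht]
      have hslicevol : ∀ t : ℝ, (Measure.pi fun _ : Fin d => (volume : Measure ℝ))
            (Prod.mk t ⁻¹' T)
          = (Icc (0:ℝ) c).indicator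
              (fun t => ENNReal.ofReal ((c - t) ^ d / d.factorial)) t := by
        intro t
        rw [hslice t, ← MeasureTheory.volume_pi]
        by_cases ht : 0 ≤ t
        · by_cases htc : t ≤ c
          · rw [if_pos ht, ih (c - t) (by linarith),
              Set.indicator_of_mem (Set.mem_Icc.2 ⟨ht, htc⟩)]
          · rw [if_pos ht, simsk_empty (by linarith),
              Set.indicator_of_notMem (by simp [htc])]
            simp
        · rw [if_neg ht, Set.indicator_of_notMem (by simp [ht])]
          simp
      simp_rw [hslicevol]
      rw [lintegral_indicator measurableSet_Icc]
      have hint : IntegrableOn (fun t : ℝ => (c - t) ^ d / d.factorial) (Icc 0 c) :=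
        (((continuous_const.sub continuous_id).pow d).div_const _).integrableOn_Icc
      have hnn : 0 ≤ᵐ[volume.restrict (Icc 0 c)] fun t : ℝ => (c - t) ^ d / d.factorial := by
        filter_upwards [ae_restrict_mem measurableSet_Icc] with t ht
        have h1 : 0 ≤ c - t := by linarith [ht.2]
        positivity
      rw [← MeasureTheory.ofReal_integral_eq_lintegral_ofReal hint hnn]
      congr 1
      rw [MeasureTheory.integral_Icc_eq_integral_Ioc, ← intervalIntegral.integral_of_le hc,
        intervalIntegral.integral_div, intervalIntegral.integral_comp_sub_left (fun x => x ^ d) c,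
        sub_self, sub_zero, integral_pow]
      have hfd : (0:ℝ) < d.factorial := by exact_mod_cast d.factorial_pos
      rw [Nat.factorial_succ]
      field_simp
      rw [zero_pow (Nat.succ_ne_zero d)]; push_cast; ring

lemma exp_aux (d : ℕ) (hd : 1 ≤ d) :
    Real.exp 1 * (d:ℝ)^(d+1) ≤ ((d:ℝ)+1)^(d+1) := by
  have hd0 : (0:ℝ) < d := by exact_mod_cast hd
  have h1 : Real.exp (1/((d:ℝ)+1)) ≤ ((d:ℝ)+1)/d := by
    have h2 := Real.add_one_le_exp (-(1/((d:ℝ)+1)))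
    have h4 : (d:ℝ)/((d:ℝ)+1) ≤ Real.exp (-(1/((d:ℝ)+1))) := by
      have h5 : -(1/((d:ℝ)+1)) + 1 = (d:ℝ)/((d:ℝ)+1) := by field_simp; ring
      linarith [h5.symm.le]
    have h6 : Real.exp (1/((d:ℝ)+1)) * ((d:ℝ)/((d:ℝ)+1)) ≤ 1 := by
      calc Real.exp (1/((d:ℝ)+1)) * ((d:ℝ)/((d:ℝ)+1))
          ≤ Real.exp (1/((d:ℝ)+1)) * Real.exp (-(1/((d:ℝ)+1))) :=
            mul_le_mul_of_nonneg_left h4 (Real.exp_pos _).le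
        _ = 1 := by rw [← Real.exp_add]; simp
    have h7 : (0:ℝ) < (d:ℝ)+1 := by positivity
    rw [le_div_iff₀ hd0]
    rw [← mul_div_assoc, div_le_one h7] at h6
    linarith
  have h8 : Real.exp 1 = (Real.exp (1/((d:ℝ)+1)))^(d+1) := by
    rw [← Real.exp_nat_mul]
    congr 1
    push_cast
    field_simp
  calc Real.exp 1 * (d:ℝ)^(d+1) = (Real.exp (1/((d:ℝ)+1)) * d)^(d+1) := by
        rw [h8, mul_pow]
    _ ≤ (((d:ℝ)+1)/d * d)^(d+1) :=
        pow_le_pow_left₀ (by positivity) (mul_le_mul_of_nonneg_right h1 hd0.le) _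
    _ = ((d:ℝ)+1)^(d+1) := by rw [div_mul_cancel₀ _ hd0.ne']

lemma fact_exp_le : ∀ d : ℕ, 7 ≤ d → (d.factorial : ℝ) * Real.exp d ≤ (d:ℝ)^(d+1) := by
  intro d hd
  induction d, hd using Nat.le_induction with
  | base =>
      have h1 : Real.exp 7 = Real.exp 1 ^ 7 := by
        rw [← Real.exp_nat_mul]; norm_num
      have h2 : Real.exp 1 ^ 7 ≤ 2.7182818286 ^ 7 :=
        pow_le_pow_left₀ (Real.exp_pos 1).le Real.exp_one_lt_d9.le 7
      rw [show ((7:ℕ):ℝ) = (7:ℝ) by norm_num, h1]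
      have h3 : ((Nat.factorial 7 : ℕ):ℝ) = 5040 := by norm_num [Nat.factorial]
      rw [h3]
      norm_num at h2 ⊢
      linarith
  | succ d hd ih =>
      have hd0 : (0:ℝ) < d := by positivity
      have hkey := exp_aux d (by omega)
      have hexp : Real.exp (d+1 : ℕ) = Real.exp d * Real.exp 1 := by
        push_cast
        rw [← Real.exp_add]
      have hfact : ((d+1).factorial : ℝ) = ((d:ℝ)+1) * d.factorial := by
        rw [Nat.factorial_succ]; push_cast; ring
      have hgoal : ((d:ℝ)+1) * (d.factorial : ℝ) * (Real.exp d * Real.exp 1)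
          ≤ ((d:ℝ)+1)^(d+2) := by
        have step1 : ((d:ℝ)+1) * (d.factorial : ℝ) * (Real.exp d * Real.exp 1)
            ≤ ((d:ℝ)+1) * (d:ℝ)^(d+1) * Real.exp 1 := by
          have := mul_le_mul_of_nonneg_left ih (le_of_lt (by positivity : (0:ℝ) < (d:ℝ)+1))
          nlinarith [Real.exp_pos (d:ℝ), Real.exp_pos 1, (d.factorial_pos : 0 < d.factorial)]
        have step2 : ((d:ℝ)+1) * (d:ℝ)^(d+1) * Real.exp 1 ≤ ((d:ℝ)+1) * ((d:ℝ)+1)^(d+1) := by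
          have := mul_le_mul_of_nonneg_left hkey (le_of_lt (by positivity : (0:ℝ) < (d:ℝ)+1))
          nlinarith
        calc ((d:ℝ)+1) * (d.factorial : ℝ) * (Real.exp d * Real.exp 1)
            ≤ ((d:ℝ)+1) * (d:ℝ)^(d+1) * Real.exp 1 := step1
          _ ≤ ((d:ℝ)+1) * ((d:ℝ)+1)^(d+1) := step2
          _ = ((d:ℝ)+1)^(d+2) := by ring
      rw [hfact, hexp]
      push_cast
      convert hgoal using 2

/-- The standard orthogonal simplex S_d ⊆ ℝ^d. -/
def orthoSimplex (d : ℕ) : Set (Fin d → ℝ) :=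
  {x | (∀ i, 0 ≤ x i) ∧ ∑ i, x i ≤ 1}

set_option maxHeartbeats 1000000 in
/-- For q uniform on S_d, d ≥ 7 and θ with θ_i < d for all i,
E e^{⟨θ,q⟩} ≤ d · ∏_i 1/(1 − θ_i/d). Here the expectation is written as the integral
over S_d divided by Vol(S_d), i.e. ∫_{S_d} e^{⟨θ,x⟩} dx ≤ Vol(S_d) · d · ∏_i 1/(1 − θ_i/d). -/
theorem mgf_uniform_simplex_bound
    (d : ℕ) (hd : 7 ≤ d) (θ : Fin d → ℝ) (hθ : ∀ i, θ i < d) :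
    ∫ x in orthoSimplex d, Real.exp (∑ i, θ i * x i)
      ≤ (volume (orthoSimplex d)).toReal * (d * ∏ i, 1 / (1 - θ i / d)) := by
  have hd0 : (0:ℝ) < d := by
    have : 0 < d := by omega
    exact_mod_cast this
  have hsd : orthoSimplex d = simsk d 1 := rfl
  have hvol : (volume (orthoSimplex d)).toReal = 1 / d.factorial := by
    rw [hsd, volume_simsk d 1 zero_le_one, one_pow, ENNReal.toReal_ofReal (by positivity)]
  have hclosed : IsClosed (orthoSimplex d) := isClosed_simsk d 1
  have hsub : orthoSimplex d ⊆ Set.Icc (0 : Fin d → ℝ) 1 := by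
    intro x hx
    obtain ⟨h0, h1⟩ := hx
    refine ⟨fun i => h0 i, fun i => ?_⟩
    calc x i ≤ ∑ j, x j := Finset.single_le_sum (fun j _ => h0 j) (Finset.mem_univ i)
      _ ≤ 1 := h1
  have hcomp : IsCompact (orthoSimplex d) :=
    IsCompact.of_isClosed_subset isCompact_Icc hclosed hsub
  have hmeas : MeasurableSet (orthoSimplex d) := hclosed.measurableSet
  set G : (Fin d → ℝ) → ℝ := fun x => Real.exp d * ∏ i, Real.exp ((θ i - d) * x i) with hG
  have hGcont : Continuous G :=
    continuous_const.mul (continuous_finset_prod _ fun i _ =>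
      Real.continuous_exp.comp (continuous_const.mul (continuous_apply i)))
  have hFcont : Continuous (fun x : Fin d → ℝ => Real.exp (∑ i, θ i * x i)) :=
    Real.continuous_exp.comp
      (continuous_finset_sum _ fun i _ => continuous_const.mul (continuous_apply i))
  have hpt : ∀ x ∈ orthoSimplex d, Real.exp (∑ i, θ i * x i) ≤ G x := by
    intro x hx
    rw [hG]
    simp only
    rw [← Real.exp_sum, ← Real.exp_add]
    apply Real.exp_le_exp.2
    have h1 : ∑ i, (θ i - (d:ℝ)) * x i = ∑ i, θ i * x i - (d:ℝ) * ∑ i, x i := by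
      rw [Finset.mul_sum, ← Finset.sum_sub_distrib]
      exact Finset.sum_congr rfl fun i _ => by ring
    have h2 : (d:ℝ) * ∑ i, x i ≤ (d:ℝ) * 1 := mul_le_mul_of_nonneg_left hx.2 hd0.le
    linarith [h1]
  have hIntF : IntegrableOn (fun x => Real.exp (∑ i, θ i * x i)) (orthoSimplex d) :=
    hFcont.continuousOn.integrableOn_compact hcomp
  have hIntGS : IntegrableOn G (orthoSimplex d) :=
    hGcont.continuousOn.integrableOn_compact hcomp
  have step1 : ∫ x in orthoSimplex d, Real.exp (∑ i, θ i * x i)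
      ≤ ∫ x in orthoSimplex d, G x :=
    setIntegral_mono_on hIntF hIntGS hmeas hpt
  set K : Set (Fin d → ℝ) := Set.univ.pi fun _ => Set.Ici (0:ℝ) with hK
  have hKmeas : MeasurableSet K := MeasurableSet.univ_pi fun _ => measurableSet_Ici
  have hb : ∀ i, (0:ℝ) < (d:ℝ) - θ i := fun i => by linarith [hθ i]
  set h : Fin d → ℝ → ℝ :=
    fun i => (Set.Ici (0:ℝ)).indicator fun t => Real.exp ((θ i - d) * t) with hh
  have h1d : ∀ i : Fin d, Integrable (h i) := by
    intro i
    rw [hh]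
    simp only
    rw [integrable_indicator_iff measurableSet_Ici]
    have h2 : IntegrableOn (fun t : ℝ => Real.exp (-((d:ℝ) - θ i) * t)) (Set.Ioi 0) :=
      exp_neg_integrableOn_Ioi 0 (hb i)
    have h3 : (fun t : ℝ => Real.exp ((θ i - d) * t))
        = fun t : ℝ => Real.exp (-((d:ℝ) - θ i) * t) := by
      funext t; ring_nf
    rw [h3, integrableOn_Ici_iff_integrableOn_Ioi]
    exact h2
  have hind : K.indicator G = fun x => Real.exp d * ∏ i, h i (x i) := by
    funext x
    by_cases hx : x ∈ K
    · rw [Set.indicator_of_mem hx, hG]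
      simp only
      congr 1
      refine Finset.prod_congr rfl fun i _ => ?_
      rw [hh]
      simp only
      rw [Set.indicator_of_mem (hx i (Set.mem_univ i))]
    · rw [Set.indicator_of_notMem hx]
      rw [hK, Set.mem_pi] at hx
      push_neg at hx
      obtain ⟨i, _, hi⟩ := hx
      have : h i (x i) = 0 := by
        rw [hh]; simp only; rw [Set.indicator_of_notMem hi]
      rw [Finset.prod_eq_zero (Finset.mem_univ i) this, mul_zero]
  have hIntH : Integrable (fun x : Fin d → ℝ => ∏ i, h i (x i)) :=
    Integrable.fintype_prod h1d
  have hIntK : IntegrableOn G K :=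
    (integrable_indicator_iff hKmeas).1 (by rw [hind]; exact hIntH.const_mul _)
  have hGnn : 0 ≤ᵐ[volume.restrict K] G := by
    refine Filter.Eventually.of_forall fun x => ?_
    rw [hG]
    positivity
  have hsubK : orthoSimplex d ⊆ K := by
    intro x hx i _
    exact hx.1 i
  have step2 : ∫ x in orthoSimplex d, G x ≤ ∫ x in K, G x :=
    setIntegral_mono_set hIntK hGnn (HasSubset.Subset.eventuallyLE hsubK)
  have hval1 : ∀ i : Fin d, ∫ t, h i t = ((d:ℝ) - θ i)⁻¹ := by
    intro i
    rw [hh]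
    simp only
    rw [integral_indicator measurableSet_Ici, MeasureTheory.integral_Ici_eq_integral_Ioi]
    have h3 : ∀ t : ℝ, Real.exp ((θ i - d) * t)
        = (fun u => Real.exp (-u)) (((d:ℝ) - θ i) * t) := fun t => by simp only; ring_nf
    rw [show (fun t : ℝ => Real.exp ((θ i - d) * t))
        = fun t : ℝ => (fun u => Real.exp (-u)) (((d:ℝ) - θ i) * t) from funext h3]
    rw [integral_comp_mul_left_Ioi (fun u => Real.exp (-u)) 0 (hb i)]
    rw [mul_zero, integral_exp_neg_Ioi, neg_zero, Real.exp_zero, smul_eq_mul, mul_one]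
  have hval : ∫ x in K, G x = Real.exp d * ∏ i, ((d:ℝ) - θ i)⁻¹ := by
    rw [← integral_indicator hKmeas, hind, MeasureTheory.integral_const_mul,
      MeasureTheory.volume_pi, MeasureTheory.integral_fintype_prod_eq_prod (f := h)]
    congr 1
    exact Finset.prod_congr rfl fun i _ => hval1 i
  have hprodnn : (0:ℝ) ≤ ∏ i, ((d:ℝ) - θ i)⁻¹ :=
    Finset.prod_nonneg fun i _ => (inv_pos.2 (hb i)).le
  have hfe := fact_exp_le d hd
  have hfd : (0:ℝ) < d.factorial := by exact_mod_cast d.factorial_pos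
  have hexp_le : Real.exp d ≤ (d:ℝ)^(d+1) / d.factorial := by
    rw [le_div_iff₀ hfd]
    linarith [hfe]
  have hprodeq : ∏ i, (1 / (1 - θ i / (d:ℝ))) = (d:ℝ)^d * ∏ i, ((d:ℝ) - θ i)⁻¹ := by
    have hterm : ∀ i : Fin d, 1 / (1 - θ i / (d:ℝ)) = (d:ℝ) * ((d:ℝ) - θ i)⁻¹ := by
      intro i
      rw [show 1 - θ i / (d:ℝ) = ((d:ℝ) - θ i) / d by field_simp]
      rw [one_div, inv_div]
      rw [div_eq_mul_inv]
    simp_rw [hterm]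
    rw [Finset.prod_mul_distrib, Finset.prod_const, Finset.card_univ, Fintype.card_fin]
  calc ∫ x in orthoSimplex d, Real.exp (∑ i, θ i * x i)
      ≤ ∫ x in K, G x := le_trans step1 step2
    _ = Real.exp d * ∏ i, ((d:ℝ) - θ i)⁻¹ := hval
    _ ≤ ((d:ℝ)^(d+1) / d.factorial) * ∏ i, ((d:ℝ) - θ i)⁻¹ :=
        mul_le_mul_of_nonneg_right hexp_le hprodnn
    _ = (volume (orthoSimplex d)).toReal * (d * ∏ i, 1 / (1 - θ i / d)) := by
        rw [hvol, hprodeq]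
        rw [pow_succ]
        ring
end

section
/- With ψ(t) = t − 1 − log t for t > 0, one has ∫_0^1 ψ(t) e^{−t} dt + ∫_1^∞ ψ(t) t e^{−t} dt < 1. -/
open MeasureTheory Set Filter

/-- Padé-type lower bound for the logarithm on `[1, ∞)`. -/
lemma log_pade {t : ℝ} (ht : 1 ≤ t) :
    3 * (t ^ 2 - 1) / (t ^ 2 + 4 * t + 1) ≤ Real.log t := by
  set f : ℝ → ℝ := fun x => Real.log x - 3 * (x ^ 2 - 1) / (x ^ 2 + 4 * x + 1) with hf
  have hderiv : ∀ x : ℝ, 0 < x →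
      HasDerivAt f (x⁻¹ - (3 * (2 * x) * (x ^ 2 + 4 * x + 1)
        - 3 * (x ^ 2 - 1) * (2 * x + 4)) / (x ^ 2 + 4 * x + 1) ^ 2) x := by
    intro x hx
    have hden : (0:ℝ) < x ^ 2 + 4 * x + 1 := by nlinarith
    have hnum : HasDerivAt (fun y : ℝ => 3 * (y ^ 2 - 1)) (3 * (2 * x)) x := by
      have := ((hasDerivAt_pow 2 x).sub_const 1).const_mul (3:ℝ)
      exact this.congr_deriv (by push_cast; ring)
    have hdenD : HasDerivAt (fun y : ℝ => y ^ 2 + 4 * y + 1) (2 * x + 4) x := by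
      have := ((hasDerivAt_pow 2 x).add ((hasDerivAt_id x).const_mul (4:ℝ))).add_const 1
      exact this.congr_deriv (by push_cast; ring)
    exact (Real.hasDerivAt_log hx.ne').sub (hnum.div hdenD hden.ne')
  have hmono : MonotoneOn f (Ici 1) := by
    apply monotoneOn_of_deriv_nonneg (convex_Ici 1)
    · intro x hx
      exact (hderiv x (lt_of_lt_of_le one_pos hx)).differentiableAt.continuousAt.continuousWithinAt
    · intro x hx
      rw [interior_Ici] at hx
      exact (hderiv x (lt_trans one_pos hx)).differentiableAt.differentiableWithinAt
    · intro x hx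
      rw [interior_Ici] at hx
      have hx0 : (0:ℝ) < x := lt_trans one_pos hx
      have hx1 : (1:ℝ) < x := hx
      rw [(hderiv x hx0).deriv]
      have hden : (0:ℝ) < x ^ 2 + 4 * x + 1 := by nlinarith
      rw [sub_nonneg, div_le_iff₀ (by positivity), inv_mul_eq_div, le_div_iff₀ hx0]
      nlinarith [pow_nonneg (by linarith : (0:ℝ) ≤ x - 1) 4, sq_nonneg (x - 1)]
  have h1 : f 1 ≤ f t := hmono (by simp) (by exact ht) ht
  have hf1 : f 1 = 0 := by simp [hf]
  have := hf1 ▸ h1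
  simpa [hf, sub_nonneg] using this

/-- Degree-4 Taylor upper bound for `exp (-t)` on `[0, 1]`. -/
lemma exp_neg_le_poly {t : ℝ} (h0 : 0 ≤ t) (h1 : t ≤ 1) :
    Real.exp (-t) ≤ 1 - t + t ^ 2 / 2 - t ^ 3 / 6 + t ^ 4 / 24 := by
  have habs : |(-t : ℝ)| ≤ 1 := by rw [abs_neg, abs_of_nonneg h0]; exact h1
  have hb := Real.exp_bound habs (n := 6) (by norm_num)
  have hsum : (∑ m ∈ Finset.range 6, (-t) ^ m / m.factorial)
      = 1 - t + t ^ 2 / 2 - t ^ 3 / 6 + t ^ 4 / 24 - t ^ 5 / 120 := by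
    simp [Finset.sum_range_succ, Nat.factorial]
    ring
  rw [hsum] at hb
  have habs6 : |(-t : ℝ)| ^ 6 = t ^ 6 := by rw [abs_neg, abs_of_nonneg h0]
  have hb' := (abs_le.1 hb).2
  rw [habs6] at hb'
  have h6 : (0:ℝ) ≤ t ^ 5 * (36 - 7 * t) :=
    mul_nonneg (pow_nonneg h0 5) (by linarith)
  norm_num [Nat.factorial] at hb'
  nlinarith [hb', h6]

/-- With ψ(t) = t − 1 − log t, one has ∫_0^1 ψ(t)e^{−t} dt + ∫_1^∞ ψ(t)·t·e^{−t} dt < 1. -/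
theorem psi_integrals_lt_one :
    (∫ t in Set.Ioc (0 : ℝ) 1, (t - 1 - Real.log t) * Real.exp (-t))
        + (∫ t in Set.Ioi (1 : ℝ), (t - 1 - Real.log t) * t * Real.exp (-t)) < 1 := by
  have hψ : ∀ t : ℝ, 0 < t → 0 ≤ t - 1 - Real.log t := by
    intro t ht
    have := Real.log_le_sub_one_of_pos ht
    linarith
  -- ## First integral: bound by 343/800
  set f1 : ℝ → ℝ :=
      fun t => (t - 1 - Real.log t) * (1 - t + t ^ 2 / 2 - t ^ 3 / 6 + t ^ 4 / 24) with hf1def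
  have hf1cont : ContinuousOn f1 (Ioc (0:ℝ) 1) := by
    apply ContinuousOn.mul
    · exact (continuous_id.continuousOn.sub continuousOn_const).sub
        (Real.continuousOn_log.mono (fun x hx => by exact ne_of_gt hx.1))
    · fun_prop
  have hf1m : AEStronglyMeasurable f1 (volume.restrict (Ioc (0:ℝ) 1)) :=
    hf1cont.aestronglyMeasurable measurableSet_Ioc
  -- bound for integrability
  have hlogb : ∀ t ∈ Ioc (0:ℝ) 1, -Real.log t ≤ 2 * (Real.sqrt t)⁻¹ := by
    intro t ht
    have hst : 0 < Real.sqrt t := Real.sqrt_pos.2 ht.1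
    have h1 : Real.log (Real.sqrt t)⁻¹ ≤ (Real.sqrt t)⁻¹ - 1 :=
      Real.log_le_sub_one_of_pos (inv_pos.2 hst)
    rw [Real.log_inv, Real.log_sqrt ht.1.le] at h1
    linarith
  have hbound : ∀ t ∈ Ioc (0:ℝ) 1, ‖f1 t‖ ≤ 2 * t ^ (-(1/2) : ℝ) := by
    intro t ht
    obtain ⟨h0, h1t⟩ := ht
    have hψt := hψ t h0
    have hPpos : (0:ℝ) ≤ 1 - t + t ^ 2 / 2 - t ^ 3 / 6 + t ^ 4 / 24 :=
      le_trans (Real.exp_pos _).le (exp_neg_le_poly h0.le h1t)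
    have hPle1 : 1 - t + t ^ 2 / 2 - t ^ 3 / 6 + t ^ 4 / 24 ≤ 1 := by
      have h2 : t ^ 2 ≤ t := by nlinarith
      have h4 : t ^ 4 ≤ t ^ 3 := by nlinarith [pow_nonneg h0.le 3]
      linarith [pow_nonneg h0.le 3, h0.le]
    have hle : f1 t ≤ -Real.log t := by
      have := mul_le_mul_of_nonneg_left hPle1 hψt
      simp only [hf1def, mul_one] at this ⊢
      linarith
    have hrw : (t : ℝ) ^ (-(1/2) : ℝ) = (Real.sqrt t)⁻¹ := by
      rw [Real.sqrt_eq_rpow, ← Real.rpow_neg h0.le]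
    rw [Real.norm_eq_abs, abs_of_nonneg (mul_nonneg hψt hPpos), hrw]
    exact le_trans hle (hlogb t ⟨h0, h1t⟩)
  have hbint : IntegrableOn (fun t : ℝ => 2 * t ^ (-(1/2) : ℝ)) (Ioc 0 1) := by
    have h := intervalIntegral.intervalIntegrable_rpow'
      (by norm_num : (-1:ℝ) < -(1/2)) (a := (0:ℝ)) (b := 1)
    exact ((intervalIntegrable_iff_integrableOn_Ioc_of_le zero_le_one).1 h).const_mul 2
  have hf1int : IntegrableOn f1 (Ioc 0 1) :=
    Integrable.mono' hbint hf1m ((ae_restrict_iff' measurableSet_Ioc).2 (ae_of_all _ hbound))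
  -- integrand comparison
  set f0 : ℝ → ℝ := fun t => (t - 1 - Real.log t) * Real.exp (-t) with hf0def
  have hf0le : ∀ t ∈ Ioc (0:ℝ) 1, f0 t ≤ f1 t := by
    intro t ht
    exact mul_le_mul_of_nonneg_left (exp_neg_le_poly ht.1.le ht.2) (hψ t ht.1)
  have hf0m : AEStronglyMeasurable f0 (volume.restrict (Ioc (0:ℝ) 1)) := by
    apply ContinuousOn.aestronglyMeasurable _ measurableSet_Ioc
    apply ContinuousOn.mul
    · exact (continuous_id.continuousOn.sub continuousOn_const).sub
        (Real.continuousOn_log.mono (fun x hx => by exact ne_of_gt hx.1))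
    · fun_prop
  have hf0int : IntegrableOn f0 (Ioc 0 1) := by
    apply hf1int.mono' hf0m
    refine (ae_restrict_iff' measurableSet_Ioc).2 (ae_of_all _ (fun t ht => ?_))
    rw [Real.norm_eq_abs, abs_of_nonneg (mul_nonneg (hψ t ht.1) (Real.exp_pos _).le)]
    exact hf0le t ht
  have hcmp1 : (∫ t in Ioc (0:ℝ) 1, f0 t) ≤ ∫ t in Ioc (0:ℝ) 1, f1 t :=
    setIntegral_mono_on hf0int hf1int measurableSet_Ioc hf0le
  -- exact value of ∫ f1
  have hval1 : (∫ t in Ioc (0:ℝ) 1, f1 t) = 343 / 800 := by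
    rw [← intervalIntegral.integral_of_le zero_le_one]
    set F : ℝ → ℝ := fun t =>
      (3/4 * t ^ 2 - 4/9 * t ^ 3 + 5/32 * t ^ 4 - 1/25 * t ^ 5 + 1/144 * t ^ 6)
        - (1 - t/2 + t ^ 2/6 - t ^ 3/24 + t ^ 4/120) * (t * Real.log t) with hFdef
    have hFc : ContinuousOn F (Icc (0:ℝ) 1) := by
      apply Continuous.continuousOn
      apply Continuous.sub
      · fun_prop
      · exact Continuous.mul (by fun_prop) Real.continuous_mul_log
    have hFd : ∀ x ∈ Ioo (0:ℝ) 1, HasDerivAt F (f1 x) x := by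
      intro x hx
      have hlog : HasDerivAt Real.log x⁻¹ x := Real.hasDerivAt_log hx.1.ne'
      have hxlog : HasDerivAt (fun y : ℝ => y * Real.log y) (Real.log x + 1) x := by
        have := (hasDerivAt_id x).mul hlog
        exact this.congr_deriv (by simp [hx.1.ne'])
      have hpoly1 : HasDerivAt
          (fun y : ℝ => 3/4 * y ^ 2 - 4/9 * y ^ 3 + 5/32 * y ^ 4 - 1/25 * y ^ 5 + 1/144 * y ^ 6)
          (3/2 * x - 4/3 * x ^ 2 + 5/8 * x ^ 3 - 1/5 * x ^ 4 + 1/24 * x ^ 5) x := by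
        have := (((((hasDerivAt_pow 2 x).const_mul (3/4 : ℝ)).sub
          ((hasDerivAt_pow 3 x).const_mul (4/9 : ℝ))).add
          ((hasDerivAt_pow 4 x).const_mul (5/32 : ℝ))).sub
          ((hasDerivAt_pow 5 x).const_mul (1/25 : ℝ))).add
          ((hasDerivAt_pow 6 x).const_mul (1/144 : ℝ))
        exact this.congr_deriv (by push_cast; ring)
      have hpoly2 : HasDerivAt
          (fun y : ℝ => 1 - y/2 + y ^ 2/6 - y ^ 3/24 + y ^ 4/120)
          (-(1/2) + x/3 - x ^ 2/8 + x ^ 3/30) x := by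
        have := ((((hasDerivAt_const x (1:ℝ)).sub ((hasDerivAt_id x).div_const 2)).add
          ((hasDerivAt_pow 2 x).div_const 6)).sub
          ((hasDerivAt_pow 3 x).div_const 24)).add
          ((hasDerivAt_pow 4 x).div_const 120)
        exact this.congr_deriv (by push_cast; ring)
      have hcomb := hpoly1.sub (hpoly2.mul hxlog)
      refine hcomb.congr_deriv ?_
      show _ = f1 x
      simp only [hf1def]
      ring
    have hFint : IntervalIntegrable f1 volume 0 1 :=
      (intervalIntegrable_iff_integrableOn_Ioc_of_le zero_le_one).2 hf1int
    rw [intervalIntegral.integral_eq_sub_of_hasDerivAt_of_le zero_le_one hFc hFd hFint]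
    simp only [hFdef]
    rw [Real.log_one]
    norm_num
  -- ## Second integral: bound by 178/121 * exp (-1)
  set p : ℝ → ℝ :=
      fun t => (13 * t ^ 3 + 100 * t ^ 2 - 239 * t + 126) / 242 * Real.exp (-t) with hpdef
  set G : ℝ → ℝ :=
      fun t => -((13 * t ^ 3 + 139 * t ^ 2 + 39 * t + 165) / 242 * Real.exp (-t)) with hGdef
  have hexpD : ∀ x : ℝ, HasDerivAt (fun y : ℝ => Real.exp (-y)) (-Real.exp (-x)) x := by
    intro x
    have := (Real.hasDerivAt_exp (-x)).comp x (hasDerivAt_neg x)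
    exact this.congr_deriv (by ring)
  have hGd : ∀ x ∈ Ici (1:ℝ), HasDerivAt G (p x) x := by
    intro x _
    have hq : HasDerivAt (fun y : ℝ => (13 * y ^ 3 + 139 * y ^ 2 + 39 * y + 165) / 242)
        ((39 * x ^ 2 + 278 * x + 39) / 242) x := by
      have h1 : HasDerivAt (fun y : ℝ => 13 * y ^ 3 + 139 * y ^ 2 + 39 * y + 165)
          (39 * x ^ 2 + 278 * x + 39) x := by
        have := (((hasDerivAt_pow 3 x).const_mul (13:ℝ)).add
          ((hasDerivAt_pow 2 x).const_mul (139:ℝ))).add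
          (((hasDerivAt_id x).const_mul (39:ℝ)).add_const (165:ℝ))
        rw [show (fun y : ℝ => 13 * y ^ 3 + 139 * y ^ 2 + 39 * y + 165) = ((fun y : ℝ => 13 * y ^ 3) + fun y => 139 * y ^ 2) + fun y => 39 * id y + 165 by funext y; simp only [Pi.add_apply, id_eq]; ring]
        refine this.congr_deriv ?_
        push_cast; ring
      exact h1.div_const 242
    have := (hq.mul (hexpD x)).neg
    refine this.congr_deriv ?_
    show _ = p x
    simp only [hpdef]
    ring
  have hppos : ∀ x ∈ Ioi (1:ℝ), 0 ≤ p x := by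
    intro x hx
    have hx1 : (1:ℝ) < x := hx
    apply mul_nonneg _ (Real.exp_pos _).le
    have h := mul_nonneg (sq_nonneg (x - 1)) (by linarith : (0:ℝ) ≤ 13 * x + 126)
    nlinarith [h]
  have hGt : Tendsto G atTop (nhds 0) := by
    have h3 := (Real.tendsto_pow_mul_exp_neg_atTop_nhds_zero 3).const_mul (13/242 : ℝ)
    have h2 := (Real.tendsto_pow_mul_exp_neg_atTop_nhds_zero 2).const_mul (139/242 : ℝ)
    have h1 := (Real.tendsto_pow_mul_exp_neg_atTop_nhds_zero 1).const_mul (39/242 : ℝ)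
    have h0 := Real.tendsto_exp_neg_atTop_nhds_zero.const_mul (165/242 : ℝ)
    have hsum := (((h3.add h2).add h1).add h0).neg
    simp only [mul_zero, add_zero, neg_zero] at hsum
    apply hsum.congr
    intro x
    simp only [hGdef]
    ring
  have hpint : IntegrableOn p (Ioi 1) :=
    integrableOn_Ioi_deriv_of_nonneg' hGd hppos hGt
  have hval2 : (∫ t in Ioi (1:ℝ), p t) = 178 / 121 * Real.exp (-1) := by
    rw [integral_Ioi_of_hasDerivAt_of_nonneg' hGd hppos hGt]
    simp only [hGdef]
    norm_num
  -- pointwise comparison on Ioi 1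
  set f2 : ℝ → ℝ := fun t => (t - 1 - Real.log t) * t * Real.exp (-t) with hf2def
  have hf2le : ∀ t ∈ Ioi (1:ℝ), f2 t ≤ p t := by
    intro t ht
    have ht1 : (1:ℝ) < t := ht
    have ht0 : (0:ℝ) < t := lt_trans one_pos ht1
    have hden : (0:ℝ) < t ^ 2 + 4 * t + 1 := by nlinarith
    have hL := log_pade ht1.le
    have hL' : 3 * (t ^ 2 - 1) ≤ Real.log t * (t ^ 2 + 4 * t + 1) :=
      (div_le_iff₀ hden).1 hL
    have hLt : 242 * t * (3 * (t ^ 2 - 1)) ≤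
        242 * t * (Real.log t * (t ^ 2 + 4 * t + 1)) :=
      mul_le_mul_of_nonneg_left hL' (by linarith)
    have hstep' : ((t - 1 - Real.log t) * t * 242) * (t ^ 2 + 4 * t + 1) ≤
        (13 * t ^ 3 + 100 * t ^ 2 - 239 * t + 126) * (t ^ 2 + 4 * t + 1) := by
      nlinarith [hLt, mul_nonneg (mul_nonneg (sq_nonneg (t - 1)) (sq_nonneg (t - 3)))
        (by linarith : (0:ℝ) ≤ 13 * t + 14)]
    have hstep : (t - 1 - Real.log t) * t ≤
        (13 * t ^ 3 + 100 * t ^ 2 - 239 * t + 126) / 242 := by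
      rw [le_div_iff₀ (by norm_num : (0:ℝ) < 242)]
      have := le_of_mul_le_mul_right hstep' hden
      linarith
    simp only [hf2def, hpdef]
    exact mul_le_mul_of_nonneg_right hstep (Real.exp_pos _).le
  have hf2m : AEStronglyMeasurable f2 (volume.restrict (Ioi (1:ℝ))) := by
    apply ContinuousOn.aestronglyMeasurable _ measurableSet_Ioi
    apply ContinuousOn.mul
    apply ContinuousOn.mul
    · exact (continuous_id.continuousOn.sub continuousOn_const).sub
        (Real.continuousOn_log.mono (fun x hx => by
          exact ne_of_gt (lt_trans one_pos hx)))
    · exact continuous_id.continuousOn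
    · fun_prop
  have hf2int : IntegrableOn f2 (Ioi 1) := by
    apply hpint.mono' hf2m
    refine (ae_restrict_iff' measurableSet_Ioi).2 (ae_of_all _ (fun t ht => ?_))
    have ht0 : (0:ℝ) < t := lt_trans one_pos ht
    rw [Real.norm_eq_abs, abs_of_nonneg
      (mul_nonneg (mul_nonneg (hψ t ht0) ht0.le) (Real.exp_pos _).le)]
    exact hf2le t ht
  have hcmp2 : (∫ t in Ioi (1:ℝ), f2 t) ≤ ∫ t in Ioi (1:ℝ), p t :=
    setIntegral_mono_on hf2int hpint measurableSet_Ioi hf2le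
  -- ## conclusion
  have hnum : (343:ℝ) / 800 + 178 / 121 * Real.exp (-1) < 1 := by
    have he := Real.exp_one_gt_d9
    have hinv : Real.exp (-1) < (2.7182818283 : ℝ)⁻¹ := by
      rw [Real.exp_neg]
      exact inv_strictAnti₀ (by norm_num) he
    nlinarith [hinv]
  calc (∫ t in Set.Ioc (0 : ℝ) 1, (t - 1 - Real.log t) * Real.exp (-t))
        + (∫ t in Set.Ioi (1 : ℝ), (t - 1 - Real.log t) * t * Real.exp (-t))
      ≤ 343 / 800 + 178 / 121 * Real.exp (-1) := by
        rw [← hval1, ← hval2]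
        exact add_le_add hcmp1 hcmp2
    _ < 1 := hnum
end
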